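/- arXiv:1503.06995 — 5 statements merged into one kernel-verified Lean document; each statement's English description precedes it below -/
import Mathlib

section
/- Let c, d : ℝ → ℝ³ be differentiable, and suppose there exist functions Λ, M : ℝ → ℝ and points p₀(u), p₁(u), q₀(u), q₁(u) in ℝ³ such that c'(u) is a positive multiple of p₁(u) - p₀(u), d'(u) is a positive multiple of q₁(u) - q₀(u), c(u) lies on the segment line through p₀(u), p₁(u), d(u) on the line through q₀(u), q₁(u), and (1-Λ(u))·p₀(u) + Λ(u)·p₁(u) = (1-M(u))·q₀(u) + M(u)·q₁(u). Then for each u the vectors c'(u), d'(u), d(u) - c(u) are linearly dependent, so the ruled surface between c and d is developable. -/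
/-- If `c'(u)` is a positive multiple of `p₁(u) - p₀(u)`, `d'(u)` a positive
multiple of `q₁(u) - q₀(u)`, `c(u)` lies on the line through `p₀(u), p₁(u)`,
`d(u)` on the line through `q₀(u), q₁(u)`, and
`(1-Λ(u))·p₀(u) + Λ(u)·p₁(u) = (1-M(u))·q₀(u) + M(u)·q₁(u)`, then the vectors
`c'(u)`, `d'(u)`, `d(u) - c(u)` are linearly dependent for every `u`, so the
ruled surface between `c` and `d` is developable. -/
theorem developable_of_common_point_on_lines
    (c d : ℝ → Fin 3 → ℝ) (hc : Differentiable ℝ c) (hd : Differentiable ℝ d)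
    (Λ M : ℝ → ℝ) (p₀ p₁ q₀ q₁ : ℝ → Fin 3 → ℝ)
    (hcp : ∀ u, ∃ k : ℝ, 0 < k ∧ deriv c u = k • (p₁ u - p₀ u))
    (hdq : ∀ u, ∃ k : ℝ, 0 < k ∧ deriv d u = k • (q₁ u - q₀ u))
    (hcl : ∀ u, ∃ t : ℝ, c u = (1 - t) • p₀ u + t • p₁ u)
    (hdl : ∀ u, ∃ t : ℝ, d u = (1 - t) • q₀ u + t • q₁ u)
    (hmeet : ∀ u, (1 - Λ u) • p₀ u + Λ u • p₁ u = (1 - M u) • q₀ u + M u • q₁ u) :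
    ∀ u, ¬ LinearIndependent ℝ ![deriv c u, deriv d u, d u - c u] := by
  intro u
  obtain ⟨k, hk, hkc⟩ := hcp u
  obtain ⟨l, hl, hld⟩ := hdq u
  obtain ⟨t, ht⟩ := hcl u
  obtain ⟨s, hs⟩ := hdl u
  -- d u - c u = a • deriv c u + b • deriv d u
  set a : ℝ := (Λ u - t) / k with ha
  set b : ℝ := (s - M u) / l with hb
  have key : d u - c u = a • deriv c u + b • deriv d u := by
    have hcu : a • deriv c u = (Λ u - t) • (p₁ u - p₀ u) := by
      rw [hkc, smul_smul, ha, div_mul_cancel₀ _ hk.ne']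
    have hdu : b • deriv d u = (s - M u) • (q₁ u - q₀ u) := by
      rw [hld, smul_smul, hb, div_mul_cancel₀ _ hl.ne']
    rw [hcu, hdu, ht, hs]
    have := hmeet u
    have h1 : (Λ u - t) • (p₁ u - p₀ u)
        = ((1 - Λ u) • p₀ u + Λ u • p₁ u) - ((1 - t) • p₀ u + t • p₁ u) := by
      module
    have h2 : (s - M u) • (q₁ u - q₀ u)
        = ((1 - s) • q₀ u + s • q₁ u) - ((1 - M u) • q₀ u + M u • q₁ u) := by
      module
    rw [h1, h2, this]
    abel
  intro hli
  have := (Fintype.linearIndependent_iff.mp hli) ![a, b, -1] ?_ 2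
  · norm_num [Matrix.cons_val_two, Matrix.tail_cons, Matrix.head_cons] at this
  · simp only [Fin.sum_univ_three, Matrix.cons_val_zero, Matrix.cons_val_one,
      Matrix.head_cons, Matrix.cons_val_two, Matrix.tail_cons]
    rw [key]
    module
end

section
/- Let c : ℝⁿ → ℝ³ be a symmetric multiaffine map (a blossom of degree n) and let Λ* be a real number. Define d as another symmetric multiaffine map of degree n such that c(v₁,…,v_{n-1},Λ*) = d(v₁,…,v_{n-1},M*) for all v₁,…,v_{n-1} and some fixed real M*. Then the diagonal curves C(u) = c(u,…,u) and D(u) = d(u,…,u) satisfy: for every u, the point (1-λ(u))·A(u) + λ(u)·B(u) equals (1-μ(u))·A'(u) + μ(u)·B'(u), where A(u) = c(u^{n-1}, a), B(u) = c(u^{n-1}, b) for any a < b with Λ* = (1-λ̂)a + λ̂ b, and analogously for d; in particular the vectors C'(u), D'(u), D(u) - C(u) are linearly dependent for all u. -/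
/-- A map `(Fin n → ℝ) → ℝ³` is multiaffine if it is affine in each argument. -/
def MultiAffineFn {n : ℕ} (c : (Fin n → ℝ) → Fin 3 → ℝ) : Prop :=
  ∀ (i : Fin n) (v : Fin n → ℝ) (s t l m : ℝ), l + m = 1 →
    c (Function.update v i (l * s + m * t)) =
      l • c (Function.update v i s) + m • c (Function.update v i t)

/-- A map `(Fin n → ℝ) → ℝ³` is symmetric if it is invariant under
permutations of its arguments. -/
def SymmetricFn {n : ℕ} (c : (Fin n → ℝ) → Fin 3 → ℝ) : Prop :=
  ∀ (σ : Equiv.Perm (Fin n)) (v : Fin n → ℝ), c (v ∘ σ) = c v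

lemma affine_comb {m : ℕ} (f : (Fin (m+1) → ℝ) → Fin 3 → ℝ) (hm : MultiAffineFn f)
    (v : Fin m → ℝ) (l a b : ℝ) :
    f (Fin.snoc v ((1-l)*a + l*b)) = (1 - l) • f (Fin.snoc v a) + l • f (Fin.snoc v b) := by
  have h := hm (Fin.last m) (Fin.snoc v a) a b (1-l) l (by ring)
  rwa [Fin.update_snoc_last, Fin.update_snoc_last, Fin.update_snoc_last] at h

lemma affine_last {m : ℕ} (f : (Fin (m+1) → ℝ) → Fin 3 → ℝ) (hm : MultiAffineFn f)
    (v : Fin m → ℝ) (t : ℝ) :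
    f (Fin.snoc v t) = (1 - t) • f (Fin.snoc v 0) + t • f (Fin.snoc v 1) := by
  have h := affine_comb f hm v t 0 1
  have e : (1-t) * 0 + t * 1 = t := by ring
  rwa [e] at h

def extPerm {m : ℕ} (σ : Equiv.Perm (Fin m)) : Equiv.Perm (Fin (m+1)) where
  toFun := Fin.lastCases (Fin.last m) (fun i => (σ i).castSucc)
  invFun := Fin.lastCases (Fin.last m) (fun i => (σ.symm i).castSucc)
  left_inv := by
    intro i
    induction i using Fin.lastCases with
    | last => simp
    | cast i => simp
  right_inv := by
    intro i
    induction i using Fin.lastCases with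
    | last => simp
    | cast i => simp

lemma snoc_comp_extPerm {m : ℕ} (σ : Equiv.Perm (Fin m)) (v : Fin m → ℝ) (t : ℝ) :
    Fin.snoc v t ∘ (extPerm σ) = Fin.snoc (v ∘ σ) t := by
  funext i
  induction i using Fin.lastCases with
  | last => simp [extPerm]
  | cast i => simp [extPerm]

lemma restrict_symm {m : ℕ} (f : (Fin (m+1) → ℝ) → Fin 3 → ℝ) (hs : SymmetricFn f) (t : ℝ) :
    SymmetricFn (fun v => f (Fin.snoc v t)) := by
  intro σ v
  simp only
  rw [← snoc_comp_extPerm σ v t, hs]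

lemma restrict_ma {m : ℕ} (f : (Fin (m+1) → ℝ) → Fin 3 → ℝ) (hm : MultiAffineFn f) (t : ℝ) :
    MultiAffineFn (fun v => f (Fin.snoc v t)) := by
  intro i v s t' l mm hlm
  simp only [Fin.snoc_update]
  exact hm i.castSucc (Fin.snoc v t) s t' l mm hlm

lemma swap_last {m : ℕ} (f : (Fin (m+2) → ℝ) → Fin 3 → ℝ) (hs : SymmetricFn f)
    (w : Fin m → ℝ) (s t : ℝ) :
    f (Fin.snoc (Fin.snoc w s) t) = f (Fin.snoc (Fin.snoc w t) s) := by
  have key : Fin.snoc (Fin.snoc w t) s ∘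
      (Equiv.swap (Fin.last (m+1)) ((Fin.last m).castSucc)) = Fin.snoc (Fin.snoc w s) t := by
    funext i
    induction i using Fin.lastCases with
    | last => simp [Equiv.swap_apply_left]
    | cast j =>
      induction j using Fin.lastCases with
      | last => simp [Equiv.swap_apply_right]
      | cast k =>
        have h1 : (k.castSucc).castSucc ≠ Fin.last (m+1) := (Fin.castSucc_lt_last _).ne
        have h2 : (k.castSucc).castSucc ≠ (Fin.last m).castSucc := by
          simp only [ne_eq, Fin.castSucc_inj]
          exact (Fin.castSucc_lt_last _).ne
        rw [Function.comp_apply, Equiv.swap_apply_of_ne_of_ne h1 h2]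
        simp
  rw [← hs (Equiv.swap (Fin.last (m+1)) ((Fin.last m).castSucc)) (Fin.snoc (Fin.snoc w t) s), key]

lemma const_succ_eq_snoc {m : ℕ} (u : ℝ) :
    (fun _ : Fin (m+1) => u) = Fin.snoc (fun _ : Fin m => u) u := by
  funext i
  induction i using Fin.lastCases with
  | last => simp
  | cast i => simp

lemma diag_hasDerivAt : ∀ (m : ℕ) (f : (Fin (m+1) → ℝ) → Fin 3 → ℝ),
    SymmetricFn f → MultiAffineFn f → ∀ u : ℝ,
    HasDerivAt (fun u : ℝ => f (fun _ => u))
      (((m:ℝ)+1) • (f (Fin.snoc (fun _ : Fin m => u) 1) - f (Fin.snoc (fun _ : Fin m => u) 0))) u := by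
  intro m
  induction m with
  | zero =>
    intro f hs hm u
    have hz : ∀ g : Fin 0 → ℝ, g = (fun _ : Fin 0 => (0:ℝ)) :=
      fun g => funext fun i => i.elim0
    set z : Fin 0 → ℝ := fun _ => (0:ℝ) with hzdef
    have hfun : (fun u : ℝ => f (fun _ => u)) =
        (fun u : ℝ => (1-u) • f (Fin.snoc z 0) + u • f (Fin.snoc z 1)) := by
      funext x
      rw [const_succ_eq_snoc x, hz (fun _ : Fin 0 => x)]
      exact affine_last f hm z x
    rw [hfun]
    have h1 : HasDerivAt (fun u : ℝ => 1 - u) (-1) u := by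
      simpa using ((hasDerivAt_id' u).const_sub (1:ℝ))
    have hd := (h1.smul_const (f (Fin.snoc z 0))).add
      ((hasDerivAt_id u).smul_const (f (Fin.snoc z 1)))
    convert hd using 1
    · rfl
    · rfl
    · rfl
    · rfl
    rw [hz (fun _ : Fin 0 => u)]
    push_cast
    module
  | succ n IH =>
    intro f hs hm u
    have h0 := IH (fun v => f (Fin.snoc v 0)) (restrict_symm f hs 0) (restrict_ma f hm 0) u
    have h1 := IH (fun v => f (Fin.snoc v 1)) (restrict_symm f hs 1) (restrict_ma f hm 1) u
    beta_reduce at h0 h1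
    have hfun : (fun u : ℝ => f (fun _ : Fin (n+2) => u)) =
        (fun u : ℝ => (1-u) • f (Fin.snoc (fun _ : Fin (n+1) => u) 0)
          + u • f (Fin.snoc (fun _ : Fin (n+1) => u) 1)) := by
      funext x
      rw [const_succ_eq_snoc x]
      exact affine_last f hm _ x
    rw [hfun]
    have hlin : HasDerivAt (fun u : ℝ => 1 - u) (-1) u := by
      simpa using ((hasDerivAt_id' u).const_sub (1:ℝ))
    have hd := (hlin.smul h0).add ((hasDerivAt_id u).smul h1)
    convert hd using 1
    · rfl
    · rfl
    · rfl
    · rfl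
    beta_reduce
    have hA : f (Fin.snoc (fun _ : Fin (n+1) => u) 0)
        = (1-u) • f (Fin.snoc (Fin.snoc (fun _ : Fin n => u) 0) 0)
          + u • f (Fin.snoc (Fin.snoc (fun _ : Fin n => u) 0) 1) := by
      rw [const_succ_eq_snoc u, swap_last f hs _ u 0]
      exact affine_last f hm _ u
    have hB : f (Fin.snoc (fun _ : Fin (n+1) => u) 1)
        = (1-u) • f (Fin.snoc (Fin.snoc (fun _ : Fin n => u) 1) 0)
          + u • f (Fin.snoc (Fin.snoc (fun _ : Fin n => u) 1) 1) := by
      rw [const_succ_eq_snoc u, swap_last f hs _ u 1]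
      exact affine_last f hm _ u
    have hswap : f (Fin.snoc (Fin.snoc (fun _ : Fin n => u) 1) 0)
        = f (Fin.snoc (Fin.snoc (fun _ : Fin n => u) 0) 1) := swap_last f hs _ 1 0
    rw [hA, hB, hswap]
    simp only [id_eq]
    push_cast
    module


/-- If the blossoms of two curves satisfy
`c(v₁,…,vₙ,Λ*) = d(v₁,…,vₙ,M*)` for all `v₁,…,vₙ`, then the corresponding
intermediate De Boor points satisfy
`(1-λ̂)·A(u) + λ̂·B(u) = (1-μ̂)·A'(u) + μ̂·B'(u)` where `A(u) = c(u,…,u,a)`,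
`B(u) = c(u,…,u,b)` for any `a < b` with `Λ* = (1-λ̂)a + λ̂b` (analogously for
`d`), and in particular the vectors `C'(u)`, `D'(u)`, `D(u)-C(u)` of the
diagonal curves are linearly dependent for all `u`. -/
theorem blossom_developability {n : ℕ}
    (c d : (Fin (n + 1) → ℝ) → Fin 3 → ℝ)
    (hcs : SymmetricFn c) (hcm : MultiAffineFn c)
    (hds : SymmetricFn d) (hdm : MultiAffineFn d)
    (Λ M : ℝ)
    (hblossom : ∀ v : Fin n → ℝ, c (Fin.snoc v Λ) = d (Fin.snoc v M))
    (C D : ℝ → Fin 3 → ℝ)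
    (hC : ∀ u, C u = c (fun _ => u)) (hD : ∀ u, D u = d (fun _ => u))
    (a b lam mu : ℝ) (hab : a < b)
    (hlam : Λ = (1 - lam) * a + lam * b) (hmu : M = (1 - mu) * a + mu * b) :
    ∀ u,
      ((1 - lam) • c (Fin.snoc (fun _ => u) a) + lam • c (Fin.snoc (fun _ => u) b)
        = (1 - mu) • d (Fin.snoc (fun _ => u) a) + mu • d (Fin.snoc (fun _ => u) b))
      ∧ ¬ LinearIndependent ℝ ![deriv C u, deriv D u, D u - C u] := by
  intro u
  set w : Fin n → ℝ := fun _ => u with hw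
  have part1 : (1 - lam) • c (Fin.snoc w a) + lam • c (Fin.snoc w b)
      = (1 - mu) • d (Fin.snoc w a) + mu • d (Fin.snoc w b) := by
    rw [← affine_comb c hcm w lam a b, ← affine_comb d hdm w mu a b, ← hlam, ← hmu]
    exact hblossom w
  refine ⟨part1, ?_⟩
  -- derivatives
  set E : Fin 3 → ℝ := c (Fin.snoc w 1) - c (Fin.snoc w 0) with hE
  set F : Fin 3 → ℝ := d (Fin.snoc w 1) - d (Fin.snoc w 0) with hF
  have hderC : deriv C u = ((n:ℝ)+1) • E := by
    have hCf : C = fun u => c (fun _ => u) := funext hC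
    rw [hCf]
    exact (diag_hasDerivAt n c hcs hcm u).deriv
  have hderD : deriv D u = ((n:ℝ)+1) • F := by
    have hDf : D = fun u => d (fun _ => u) := funext hD
    rw [hDf]
    exact (diag_hasDerivAt n d hds hdm u).deriv
  have hCu : C u = c (Fin.snoc w 0) + u • E := by
    rw [hC u, const_succ_eq_snoc u, ← hw, affine_last c hcm w u, hE]
    module
  have hDu : D u = d (Fin.snoc w 0) + u • F := by
    rw [hD u, const_succ_eq_snoc u, ← hw, affine_last d hdm w u, hF]
    module
  have hcd : c (Fin.snoc w 0) + Λ • E = d (Fin.snoc w 0) + M • F := by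
    have h1 : c (Fin.snoc w Λ) = c (Fin.snoc w 0) + Λ • E := by
      rw [affine_last c hcm w Λ, hE]; module
    have h2 : d (Fin.snoc w M) = d (Fin.snoc w 0) + M • F := by
      rw [affine_last d hdm w M, hF]; module
    rw [← h1, ← h2]
    exact hblossom w
  have hd0 : d (Fin.snoc w 0) = c (Fin.snoc w 0) + Λ • E - M • F :=
    eq_sub_of_add_eq hcd.symm
  have hZ : D u - C u = (Λ - u) • E + (u - M) • F := by
    rw [hCu, hDu, hd0]
    module
  have hnz : ((n:ℝ)+1) ≠ 0 := by positivity
  intro hli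
  have hsum : ∑ i, (![(Λ-u)/((n:ℝ)+1), (u-M)/((n:ℝ)+1), -1] i)
      • (![deriv C u, deriv D u, D u - C u] i) = 0 := by
    simp only [Fin.sum_univ_three, Matrix.cons_val_zero, Matrix.cons_val_one,
      Matrix.head_cons, Matrix.cons_val_two, Matrix.tail_cons]
    rw [hderC, hderD, hZ, smul_smul, smul_smul, div_mul_cancel₀ _ hnz, div_mul_cancel₀ _ hnz]
    module
  have := Fintype.linearIndependent_iff.mp hli _ hsum 2
  simp at this
end

section
/- Let d : ℝⁿ → ℝ³ be a symmetric multiaffine map with diagonal D(u) = d(u,…,u), and let f : ℝ → ℝ be an affine function. Define h : ℝ^{n+1} → ℝ³ by h(u₀,…,uₙ) = (1/(n+1)) · Σ_{i=0}^{n} f(u_i) · d(u₀,…,u_{i-1},u_{i+1},…,uₙ). Then h is symmetric, multiaffine, and its diagonal satisfies h(u,…,u) = f(u)·D(u) for all u. -/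
lemma key_perm {n : ℕ} (σ : Equiv.Perm (Fin (n+1))) (i : Fin (n+1)) :
    ∃ τ : Equiv.Perm (Fin n), ∀ k, (σ i).succAbove (τ k) = σ (i.succAbove k) := by
  have hg : Function.Injective (fun k => σ (i.succAbove k)) :=
    σ.injective.comp (Fin.succAbove_right_injective)
  have hs : Function.Injective ((σ i).succAbove) := Fin.succAbove_right_injective
  have hrange : Set.range (fun k => σ (i.succAbove k)) = Set.range ((σ i).succAbove) := by
    have : (fun k => σ (i.succAbove k)) = σ ∘ i.succAbove := rfl
    rw [this, Set.range_comp, Fin.range_succAbove, Fin.range_succAbove,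
      Set.image_compl_eq σ.bijective, Set.image_singleton]
  refine ⟨(Equiv.ofInjective _ hg).trans ((Equiv.setCongr hrange).trans
    (Equiv.ofInjective _ hs).symm), ?_⟩
  intro k
  simp [Equiv.apply_ofInjective_symm hs]

/-- If `d` is a symmetric multiaffine map of degree `n` with diagonal `D` and
`f` is affine, then `h(u₀,…,uₙ) = (1/(n+1)) Σᵢ f(uᵢ)·d(u₀,…,ûᵢ,…,uₙ)` is
symmetric, multiaffine, and its diagonal is `h(u,…,u) = f(u)·D(u)`. -/
theorem blossom_of_affine_scaling {n : ℕ}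
    (d : (Fin n → ℝ) → Fin 3 → ℝ) (hds : SymmetricFn d) (hdm : MultiAffineFn d)
    (D : ℝ → Fin 3 → ℝ) (hD : ∀ u, D u = d (fun _ => u))
    (f : ℝ → ℝ) (hf : ∃ a b : ℝ, ∀ u, f u = a * u + b)
    (h : (Fin (n + 1) → ℝ) → Fin 3 → ℝ)
    (hh : ∀ v : Fin (n + 1) → ℝ,
      h v = ((n : ℝ) + 1)⁻¹ • ∑ i : Fin (n + 1), f (v i) • d (v ∘ i.succAbove)) :
    SymmetricFn h ∧ MultiAffineFn h ∧ ∀ u : ℝ, h (fun _ => u) = f u • D u := by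
  obtain ⟨a, b, hfab⟩ := hf
  refine ⟨?_, ?_, ?_⟩
  · intro σ v
    rw [hh, hh]
    congr 1
    rw [← Equiv.sum_comp σ (fun j => f (v j) • d (v ∘ j.succAbove))]
    refine Finset.sum_congr rfl fun i _ => ?_
    obtain ⟨τ, hτ⟩ := key_perm σ i
    have hcomp : (v ∘ σ) ∘ i.succAbove = (v ∘ (σ i).succAbove) ∘ τ := by
      funext k
      simp [Function.comp, ← hτ k]
    show f (v (σ i)) • d ((v ∘ σ) ∘ i.succAbove) = f (v (σ i)) • d (v ∘ (σ i).succAbove)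
    rw [hcomp, hds τ]
  · intro i v s t l m hlm
    rw [hh, hh, hh, smul_comm l, smul_comm m, ← smul_add]
    congr 1
    rw [Finset.smul_sum, Finset.smul_sum, ← Finset.sum_add_distrib]
    refine Finset.sum_congr rfl fun j _ => ?_
    by_cases hj : j = i
    · subst hj
      have hc : ∀ x : ℝ, Function.update v j x ∘ j.succAbove = v ∘ j.succAbove := by
        intro x; funext k
        simp [Function.comp, Function.update_of_ne (Fin.succAbove_ne j k)]
      simp only [Function.update_self, hc]
      have hfx : f (l * s + m * t) = l * f s + m * f t := by
        rw [hfab, hfab, hfab]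
        have he : l*(a*s+b)+m*(a*t+b) = a*(l*s+m*t) + (l+m)*b := by ring
        rw [he, hlm]; ring
      rw [hfx, add_smul, mul_smul, mul_smul]
    · have hji : i ≠ j := fun e => hj e.symm
      obtain ⟨k, hk⟩ := Fin.exists_succAbove_eq hji
      have hc : ∀ x : ℝ, Function.update v i x ∘ j.succAbove =
          Function.update (v ∘ j.succAbove) k x := by
        intro x; funext p
        by_cases hp : p = k
        · show Function.update v i x (j.succAbove p) = Function.update (v ∘ j.succAbove) k x p
          rw [hp, hk, Function.update_self, Function.update_self]
        · have : j.succAbove p ≠ i := by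
            rw [← hk]; exact fun e => hp (Fin.succAbove_right_injective e)
          simp [Function.comp, Function.update_of_ne hp, Function.update_of_ne this]
      simp only [Function.update_of_ne hj, hc]
      rw [hdm k (v ∘ j.succAbove) s t l m hlm, smul_add, smul_comm (f (v j)) l,
        smul_comm (f (v j)) m]
  · intro u
    rw [hh, hD]
    have hc : ∀ i : Fin (n+1), (fun _ : Fin (n+1) => u) ∘ i.succAbove =
        (fun _ : Fin n => u) := fun i => rfl
    simp only [hc, Finset.sum_const, Finset.card_univ, Fintype.card_fin]
    rw [← Nat.cast_smul_eq_nsmul ℝ, smul_smul]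
    push_cast
    rw [inv_mul_cancel₀ (by positivity), one_smul]
end

section
/- Let c, d : ℝⁿ → ℝ³ be symmetric multiaffine maps with diagonals C(u), D(u), and f : ℝ → ℝ affine. Then the map d̃ : ℝ^{n+1} → ℝ³ defined by d̃(u₀,…,uₙ) = (1/(n+1)) Σ_{i=0}^{n} [ f(u_i)·d(u₀,…,û_i,…,uₙ) + (1-f(u_i))·c(u₀,…,û_i,…,uₙ) ] is symmetric and multiaffine, and its diagonal is d̃(u,…,u) = (1-f(u))·C(u) + f(u)·D(u). -/
/-- The blossom of the curve obtained by moving along the rulings of the ruled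
surface between `C` and `D` by an affine factor `f`:
`d̃(u₀,…,uₙ) = (1/(n+1)) Σᵢ [f(uᵢ)·d(…ûᵢ…) + (1-f(uᵢ))·c(…ûᵢ…)]` is symmetric
and multiaffine, with diagonal `(1-f(u))·C(u) + f(u)·D(u)`. -/
theorem blossom_of_ruling_rescaling {n : ℕ}
    (c d : (Fin n → ℝ) → Fin 3 → ℝ)
    (hcs : SymmetricFn c) (hcm : MultiAffineFn c)
    (hds : SymmetricFn d) (hdm : MultiAffineFn d)
    (C D : ℝ → Fin 3 → ℝ)
    (hC : ∀ u, C u = c (fun _ => u)) (hD : ∀ u, D u = d (fun _ => u))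
    (f : ℝ → ℝ) (hf : ∃ a b : ℝ, ∀ u, f u = a * u + b)
    (dt : (Fin (n + 1) → ℝ) → Fin 3 → ℝ)
    (hdt : ∀ v : Fin (n + 1) → ℝ,
      dt v = ((n : ℝ) + 1)⁻¹ • ∑ i : Fin (n + 1),
        (f (v i) • d (v ∘ i.succAbove) + (1 - f (v i)) • c (v ∘ i.succAbove))) :
    SymmetricFn dt ∧ MultiAffineFn dt ∧
      ∀ u : ℝ, dt (fun _ => u) = (1 - f u) • C u + f u • D u := by

  obtain ⟨a, b, hab⟩ := hf
  have hfaff : ∀ s t l m : ℝ, l + m = 1 → f (l * s + m * t) = l * f s + m * f t := by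
    intro s t l m hlm
    simp only [hab]
    linear_combination (-b) * hlm
  -- the summand
  set g : (Fin (n+1) → ℝ) → Fin (n+1) → Fin 3 → ℝ := fun v i =>
    f (v i) • d (v ∘ i.succAbove) + (1 - f (v i)) • c (v ∘ i.succAbove) with hg
  have hdt' : ∀ v, dt v = ((n : ℝ) + 1)⁻¹ • ∑ i : Fin (n+1), g v i := hdt
  -- existence of the induced permutation on the remaining indices
  have hperm : ∀ (σ : Equiv.Perm (Fin (n+1))) (i : Fin (n+1)),
      ∃ τ : Equiv.Perm (Fin n), ∀ j, (σ i).succAbove (τ j) = σ (i.succAbove j) := by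
    intro σ i
    have hne : ∀ j : Fin n, σ (i.succAbove j) ≠ σ i := fun j h =>
      Fin.succAbove_ne i j (σ.injective h)
    choose t ht using fun j => Fin.exists_succAbove_eq (hne j)
    have hinj : Function.Injective t := by
      intro j1 j2 h
      have : (σ i).succAbove (t j1) = (σ i).succAbove (t j2) := by rw [h]
      rw [ht, ht] at this
      exact Fin.succAbove_right_injective (σ.injective this)
    exact ⟨Equiv.ofBijective t (Finite.injective_iff_bijective.mp hinj), fun j => ht j⟩
  refine ⟨?_, ?_, ?_⟩
  · -- symmetry
    intro σ v
    rw [hdt', hdt']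
    congr 1
    rw [← Equiv.sum_comp σ (g v)]
    refine Finset.sum_congr rfl fun i _ => ?_
    obtain ⟨τ, hτ⟩ := hperm σ i
    have hcomp : (v ∘ σ) ∘ i.succAbove = (v ∘ (σ i).succAbove) ∘ τ := by
      funext j
      simp [Function.comp, hτ]
    simp only [hg, Function.comp_apply, hcomp, hds τ, hcs τ]
  · -- multiaffine
    intro i₀ v s t l m hlm
    rw [hdt', hdt', hdt']
    have key : ∑ i : Fin (n+1), g (Function.update v i₀ (l * s + m * t)) i =
        l • ∑ i : Fin (n+1), g (Function.update v i₀ s) i +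
        m • ∑ i : Fin (n+1), g (Function.update v i₀ t) i := by
      rw [Finset.smul_sum, Finset.smul_sum, ← Finset.sum_add_distrib]
      refine Finset.sum_congr rfl fun i _ => ?_
      by_cases hi : i = i₀
      · subst hi
        have hcomp : ∀ x : ℝ, (Function.update v i x) ∘ i.succAbove = v ∘ i.succAbove := by
          intro x
          funext j
          simp [Function.update_of_ne (Fin.succAbove_ne i j)]
        have hval : ∀ x : ℝ, (Function.update v i x) i = x := fun x =>
          Function.update_self i x v
        funext k
        simp only [hg, hcomp, hval, Pi.add_apply, Pi.smul_apply, smul_eq_mul,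
          hfaff s t l m hlm]
        linear_combination (-(c (v ∘ i.succAbove) k)) * hlm
      · obtain ⟨j, hj⟩ := Fin.exists_succAbove_eq (Ne.symm hi : i₀ ≠ i)
        have hcomp : ∀ x : ℝ, (Function.update v i₀ x) ∘ i.succAbove =
            Function.update (v ∘ i.succAbove) j x := by
          intro x
          rw [← hj]
          exact Function.update_comp_eq_of_injective v Fin.succAbove_right_injective j x
        have hval : ∀ x : ℝ, (Function.update v i₀ x) i = v i := fun x =>
          Function.update_of_ne hi x v
        have hdl := hdm j (v ∘ i.succAbove) s t l m hlm
        have hcl := hcm j (v ∘ i.succAbove) s t l m hlm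
        funext k
        have hdlk := congrFun hdl k
        have hclk := congrFun hcl k
        simp only [Pi.add_apply, Pi.smul_apply, smul_eq_mul] at hdlk hclk
        simp only [hg, hcomp, hval, Pi.add_apply, Pi.smul_apply, smul_eq_mul,
          hdlk, hclk]
        ring
    rw [key, smul_add, smul_comm ((n : ℝ) + 1)⁻¹ l, smul_comm ((n : ℝ) + 1)⁻¹ m]
  · -- diagonal
    intro u
    have hcomp : ∀ i : Fin (n+1), (fun _ : Fin (n+1) => u) ∘ i.succAbove =
        (fun _ : Fin n => u) := fun i => rfl
    have hnz : ((n : ℝ) + 1) ≠ 0 := by positivity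
    funext k
    simp only [hdt', hg, hcomp, hC, hD, Finset.sum_const, Finset.card_univ,
      Fintype.card_fin, Pi.smul_apply, Pi.add_apply, smul_eq_mul, nsmul_eq_mul,
      Nat.cast_add, Nat.cast_one]
    field_simp
    simp only [Pi.mul_apply, Pi.add_apply, Pi.smul_apply, smul_eq_mul, Pi.natCast_apply, Pi.one_apply]
    ring
end

section
/- Let c, d : ℝ → ℝ³ be curves whose blossoms (symmetric multiaffine maps of degree n over a knot sequence u₀ ≤ … ≤ u_K) satisfy c[v₁,…,v_{n-1},Λ*] = d[v₁,…,v_{n-1},M*] for all v₁,…,v_{n-1} and fixed reals Λ*, M*. Then the control points c_i = c[u_i,…,u_{i+n-1}], d_i = d[u_i,…,u_{i+n-1}] satisfy the linear relation (u_{i+n} - Λ*)·c_i + (Λ* - u_i)·c_{i+1} = (u_{i+n} - M*)·d_i + (M* - u_i)·d_{i+1} for all i with u_i < u_{i+n}. -/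
/-- Corollary 1 of the paper: if the blossoms (degree `n+1`, knots `u`) satisfy
`c[v₁,…,vₙ,Λ*] = d[v₁,…,vₙ,M*]`, then the control points
`cᵢ = c[uᵢ,…,u_{i+n}]`, `dᵢ = d[uᵢ,…,u_{i+n}]` satisfy
`(u_{i+n+1}-Λ*)·cᵢ + (Λ*-uᵢ)·c_{i+1} = (u_{i+n+1}-M*)·dᵢ + (M*-uᵢ)·d_{i+1}`. -/
theorem control_point_relation_of_blossom_relation {n : ℕ}
    (c d : (Fin (n + 1) → ℝ) → Fin 3 → ℝ)
    (hcs : SymmetricFn c) (hcm : MultiAffineFn c)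
    (hds : SymmetricFn d) (hdm : MultiAffineFn d)
    (u : ℕ → ℝ) (hu : Monotone u) (Λ M : ℝ)
    (hblossom : ∀ v : Fin n → ℝ, c (Fin.snoc v Λ) = d (Fin.snoc v M)) :
    ∀ i : ℕ, u i < u (i + n + 1) →
      (u (i + n + 1) - Λ) • c (fun j : Fin (n + 1) => u (i + j)) +
        (Λ - u i) • c (fun j : Fin (n + 1) => u (i + 1 + j)) =
      (u (i + n + 1) - M) • d (fun j : Fin (n + 1) => u (i + j)) +
        (M - u i) • d (fun j : Fin (n + 1) => u (i + 1 + j)) := by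
  intro i hi
  set a := u i with ha
  set b := u (i + n + 1) with hb
  have hD : b - a ≠ 0 := sub_ne_zero.mpr (ne_of_gt hi)
  set v : Fin n → ℝ := fun j => u (i + 1 + j) with hv
  -- update at the last slot of a snoc
  have hupd : ∀ (x y : ℝ),
      Function.update (Fin.snoc v x : Fin (n+1) → ℝ) (Fin.last n) y = Fin.snoc v y := by
    intro x y
    funext j
    refine Fin.lastCases ?_ ?_ j
    · simp
    · intro k; simp [Function.update, Fin.castSucc_lt_last k |>.ne]
  -- expansion lemma
  have key : ∀ (f : (Fin (n+1) → ℝ) → Fin 3 → ℝ), MultiAffineFn f → ∀ x : ℝ,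
      (b - a) • f (Fin.snoc v x) =
        (b - x) • f (Fin.snoc v a) + (x - a) • f (Fin.snoc v b) := by
    intro f hf x
    have hlm : (b - x) / (b - a) + (x - a) / (b - a) = 1 := by
      field_simp; ring
    have hx : (b - x) / (b - a) * a + (x - a) / (b - a) * b = x := by
      field_simp; ring
    have h := hf (Fin.last n) (Fin.snoc v 0) a b ((b - x)/(b - a)) ((x - a)/(b - a)) hlm
    rw [hx, hupd, hupd, hupd] at h
    rw [h, smul_add, smul_smul, smul_smul,
      mul_div_cancel₀ _ hD, mul_div_cancel₀ _ hD]
  -- identify (fun j => u (i+1+j)) with snoc v b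
  have h1 : (fun j : Fin (n + 1) => u (i + 1 + j)) = Fin.snoc v b := by
    funext j
    refine Fin.lastCases ?_ ?_ j
    · simp [hb]; ring_nf
    · intro k; simp [hv]
  -- identify c (fun j => u (i+j)) with c (snoc v a), via the rotation
  have hperm : ∀ (f : (Fin (n+1) → ℝ) → Fin 3 → ℝ), SymmetricFn f →
      f (Fin.snoc v a) = f (fun j : Fin (n + 1) => u (i + j)) := by
    intro f hf
    have hcomp : (Fin.snoc v a : Fin (n+1) → ℝ) =
        (fun j : Fin (n + 1) => u (i + j)) ∘ (finRotate (n+1)) := by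
      funext j
      refine Fin.lastCases ?_ ?_ j
      · simp [ha, finRotate_last]
      · intro k
        have hvk : ((k.castSucc + 1 : Fin (n+1)) : ℕ) = (k : ℕ) + 1 := by
          have := Fin.val_add_one_of_lt (Fin.castSucc_lt_last k)
          simpa using this
        simp [Function.comp, finRotate_succ_apply, hvk, hv]
        ring_nf
    rw [hcomp, hf]
  have hc := key c hcm Λ
  have hd := key d hdm M
  have hbl : (b - a) • c (Fin.snoc v Λ) = (b - a) • d (Fin.snoc v M) := by
    rw [hblossom v]
  rw [hc, hd, hperm c hcs, hperm d hds] at hbl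
  rw [h1]
  exact hbl
end
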